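/- Let n, l ≥ 1, 1 ≤ p,q ≤ n, and r ≥ 1. Then in U(Q(n))^{⊗l}: U^{⊗l}∘Δ_l^{op}(T_{q,p}^{(r)+}) = (−1)^r times the sum over all 1 ≤ p_1,…,p_{r−1} ≤ n and all l ≥ i_1 ≥ i_2 ≥ … ≥ i_r ≥ 1 of the ordered products Π_{a=1}^{r} (x^{i_a}_{p_{a−1}, p_a} + (−1)^{r−a} ξ^{i_a}_{p_{a−1}, p_a}), where p_0 := p and p_r := q. -/
import Mathlib


noncomputable section
open scoped Classical

/-! # The universal enveloping superalgebra `U(Q(n))` of the queer Lie superalgebra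

`U(Q(n))` is presented by even generators `e i j` and odd generators `f i j`
(`1 ≤ i,j ≤ n`) subject to the relations
`[e i j, e k l] = δ_{jk} e i l - δ_{li} e k j`,
`[e i j, f k l] = δ_{jk} f i l - δ_{li} f k j`,
`f i j * f k l + f k l * f i j = δ_{jk} e i l + δ_{li} e k j`. -/

/-- Generators of `U(Q(n))`: `E i j` (even) and `F i j` (odd). -/
inductive QGen (n : ℕ) : Type
  | E : Fin n → Fin n → QGen n
  | F : Fin n → Fin n → QGen n

/-- Kronecker delta. -/
def kd {n : ℕ} (i j : Fin n) : ℂ := if i = j then 1 else 0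

/-- The defining relations of `U(Q(n))`. -/
inductive QRel (n : ℕ) : FreeAlgebra ℂ (QGen n) → FreeAlgebra ℂ (QGen n) → Prop
  | ee (i j k l : Fin n) : QRel n
      (FreeAlgebra.ι ℂ (QGen.E i j) * FreeAlgebra.ι ℂ (QGen.E k l) -
        FreeAlgebra.ι ℂ (QGen.E k l) * FreeAlgebra.ι ℂ (QGen.E i j))
      (kd j k • FreeAlgebra.ι ℂ (QGen.E i l) - kd l i • FreeAlgebra.ι ℂ (QGen.E k j))
  | ef (i j k l : Fin n) : QRel n
      (FreeAlgebra.ι ℂ (QGen.E i j) * FreeAlgebra.ι ℂ (QGen.F k l) -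
        FreeAlgebra.ι ℂ (QGen.F k l) * FreeAlgebra.ι ℂ (QGen.E i j))
      (kd j k • FreeAlgebra.ι ℂ (QGen.F i l) - kd l i • FreeAlgebra.ι ℂ (QGen.F k j))
  | ff (i j k l : Fin n) : QRel n
      (FreeAlgebra.ι ℂ (QGen.F i j) * FreeAlgebra.ι ℂ (QGen.F k l) +
        FreeAlgebra.ι ℂ (QGen.F k l) * FreeAlgebra.ι ℂ (QGen.F i j))
      (kd j k • FreeAlgebra.ι ℂ (QGen.E i l) + kd l i • FreeAlgebra.ι ℂ (QGen.E k j))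

/-- The universal enveloping superalgebra `U(Q(n))`. -/
abbrev UQ (n : ℕ) := RingQuot (QRel n)

/-- The generator `e i j` of `U(Q(n))`. -/
def Ue {n : ℕ} (i j : Fin n) : UQ n :=
  RingQuot.mkAlgHom ℂ (QRel n) (FreeAlgebra.ι ℂ (QGen.E i j))

/-- The generator `f i j` of `U(Q(n))`. -/
def Uf {n : ℕ} (i j : Fin n) : UQ n :=
  RingQuot.mkAlgHom ℂ (QRel n) (FreeAlgebra.ι ℂ (QGen.F i j))

/-- Sergeev's elements `e_{ij}^{(m)}` and `f_{ij}^{(m)}` of `U(Q(n))`, defined recursively by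
`e^{(0)} = δ`, `f^{(0)} = 0`,
`e_{ij}^{(m)} = Σ_k e_{ik} e_{kj}^{(m-1)} + (-1)^{m+1} Σ_k f_{ik} f_{kj}^{(m-1)}`,
`f_{ij}^{(m)} = Σ_k e_{ik} f_{kj}^{(m-1)} + (-1)^{m+1} Σ_k f_{ik} e_{kj}^{(m-1)}`. -/
def efU (n : ℕ) : ℕ → (Fin n → Fin n → UQ n) × (Fin n → Fin n → UQ n)
  | 0 => (fun i j => algebraMap ℂ (UQ n) (kd i j), fun _ _ => 0)
  | m + 1 =>
      (fun i j => (∑ k, Ue i k * (efU n m).1 k j) +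
        (-1 : ℂ) ^ m • ∑ k, Uf i k * (efU n m).2 k j,
       fun i j => (∑ k, Ue i k * (efU n m).2 k j) +
        (-1 : ℂ) ^ m • ∑ k, Uf i k * (efU n m).1 k j)

/-- `e_{ij}^{(m)}`. -/
def eU {n : ℕ} (m : ℕ) (i j : Fin n) : UQ n := (efU n m).1 i j
/-- `f_{ij}^{(m)}`. -/
def fU {n : ℕ} (m : ℕ) (i j : Fin n) : UQ n := (efU n m).2 i j

/-- For `l ∣ n`, the index `l(p-1)+i` of `{1,…,n}` (0-based: block `p`, position `i`). -/
def bidx {n l : ℕ} (h : l ∣ n) (p : Fin (n / l)) (i : Fin l) : Fin n :=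
  ⟨l * p.val + i.val, by
    have h1 : i.val < l := i.isLt
    have h2 : p.val + 1 ≤ n / l := p.isLt
    have h3 : l * (p.val + 1) ≤ l * (n / l) := Nat.mul_le_mul_left l h2
    have h4 : n / l * l ≤ n := Nat.div_mul_le_self n l
    have h5 : l * (p.val + 1) = l * p.val + l := Nat.mul_succ l p.val
    have h6 : l * (n / l) = n / l * l := Nat.mul_comm l (n / l)
    omega⟩
set_option linter.unusedVariables false

/-! # The character `χ`, the left ideal `I_χ` and the finite W-algebra data

Here `l ∣ n` and `χ` corresponds to the even nilpotent element of `Q(n)` all of whose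
Jordan blocks have size `l`.  The subalgebra `m = ⊕_{j<0} g_j` is spanned by the
elements `e_{l(p-1)+i+k, l(q-1)+i}` and `f_{l(p-1)+i+k, l(q-1)+i}` (`k ≥ 1`), and
`χ(e_{l(p-1)+i+1, l(q-1)+i}) = δ_{pq}` and `χ = 0` on the other basis elements. -/

/-- The set of elements `a - χ(a)` for `a` ranging over the standard basis of `m`;
(rows/columns written 0-based: `a` is the position of the row inside its block `p`,
`b` the position of the column inside its block `q`, with `b < a`). -/
def mSet (n l : ℕ) (h : l ∣ n) : Set (UQ n) :=
  { x : UQ n | ∃ (p q : Fin (n / l)) (a b : Fin l), b.val < a.val ∧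
      (x = Ue (bidx h p a) (bidx h q b) -
            algebraMap ℂ (UQ n) (if a.val = b.val + 1 ∧ p = q then 1 else 0) ∨
       x = Uf (bidx h p a) (bidx h q b)) }

/-- The left ideal `I_χ` of `U(Q(n))` generated by the `a - χ(a)`, `a ∈ m`. -/
def Ichi (n l : ℕ) (h : l ∣ n) : Submodule (UQ n) (UQ n) :=
  Submodule.span (UQ n) (mSet n l h)

/-- The quotient `U(Q(n))/I_χ` (as a `ℂ`-vector space). -/
abbrev Wq (n l : ℕ) (h : l ∣ n) := UQ n ⧸ (Ichi n l h).restrictScalars ℂ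

/-- The quotient map `π : U(Q(n)) → U(Q(n))/I_χ`. -/
def piq (n l : ℕ) (h : l ∣ n) : UQ n →ₗ[ℂ] Wq n l h :=
  ((Ichi n l h).restrictScalars ℂ).mkQ

/-- `y` super-commutes with `m` into `I_χ`:  `[a, y] ∈ I_χ` for every `a` in the standard
basis of `m`.  Here the super-commutator of the odd element `f` with (the possibly
non-homogeneous) `y` is `f * y - σ(y) * f`, where `σ` is the parity involution of
`U(Q(n))` (the algebra automorphism fixing the `e`'s and negating the `f`'s). -/
def Wcond {n l : ℕ} (h : l ∣ n) (σ : UQ n →ₐ[ℂ] UQ n) (y : UQ n) : Prop :=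
  ∀ (p q : Fin (n / l)) (a b : Fin l), b.val < a.val →
    (Ue (bidx h p a) (bidx h q b) * y - y * Ue (bidx h p a) (bidx h q b) ∈ Ichi n l h) ∧
    (Uf (bidx h p a) (bidx h q b) * y - σ y * Uf (bidx h p a) (bidx h q b) ∈ Ichi n l h)

/-- The finite W-algebra `W_χ = {π(y) | [a, y] ∈ I_χ for all a ∈ m}`, as a subset of
`U(Q(n))/I_χ`.  (Its product is `π(y₁)·π(y₂) = π(y₁y₂)`.) -/
def WchiSet (n l : ℕ) (h : l ∣ n) (σ : UQ n →ₐ[ℂ] UQ n) : Set (Wq n l h) :=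
  { w : Wq n l h | ∃ y : UQ n, Wcond h σ y ∧ piq n l h y = w }

/-- The standard basis elements of the parabolic subalgebra `p = ⊕_{j≥0} g_j`. -/
def pSet (n l : ℕ) (h : l ∣ n) : Set (UQ n) :=
  { x : UQ n | ∃ (p q : Fin (n / l)) (a b : Fin l), a.val ≤ b.val ∧
      (x = Ue (bidx h p a) (bidx h q b) ∨ x = Uf (bidx h p a) (bidx h q b)) }

/-- The standard basis elements of the nilradical `n = ⊕_{j>0} g_j` of `p`. -/
def nSet (n l : ℕ) (h : l ∣ n) : Set (UQ n) :=
  { x : UQ n | ∃ (p q : Fin (n / l)) (a b : Fin l), a.val < b.val ∧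
      (x = Ue (bidx h p a) (bidx h q b) ∨ x = Uf (bidx h p a) (bidx h q b)) }

/-- The kernel of the Harish-Chandra projection `ϑ : U(p) → U(g₀)`, realized inside
`U(Q(n))`: the `ℂ`-span of `U(p)·n`.  (By the PBW theorem, `U(g) = U(p) ⊕ I_χ` and
`U(p) = U(g₀) ⊕ U(p)n`, so for `y ∈ U(g)`, `ϑ(pr(y)) = t` iff
`y - t ∈ I_χ + U(p)n`.) -/
def Lspan (n l : ℕ) (h : l ∣ n) : Submodule ℂ (UQ n) :=
  Submodule.span ℂ
    { x : UQ n | ∃ u ∈ Algebra.adjoin ℂ (pSet n l h), ∃ g ∈ nSet n l h, x = u * g }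

/-- A descriptor of a generator of `U(p)`:  `(b, p, q, a, c)` is
`e_{l(p-1)+(a+1), l(q-1)+(c+1)}` if `b = false` and `f_{…}` if `b = true`
(required: `a ≤ c`). -/
def pgElem {n l : ℕ} (h : l ∣ n) :
    Bool × Fin (n / l) × Fin (n / l) × Fin l × Fin l → UQ n
  | (b, p, q, a, c) => (if b then Uf else Ue) (bidx h p a) (bidx h q c)

/-- Kazhdan degree `2k+2` of a `p`-generator of block offset `k = c - a`. -/
def pgDeg {l m : ℕ} (d : Bool × Fin m × Fin m × Fin l × Fin l) : ℕ :=
  2 * (d.2.2.2.2.val - d.2.2.2.1.val) + 2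

/-- Weight `2k` of a `p`-generator of block offset `k = c - a`. -/
def pgWt {l m : ℕ} (d : Bool × Fin m × Fin m × Fin l × Fin l) : ℕ :=
  2 * (d.2.2.2.2.val - d.2.2.2.1.val)

/-- Monomials in the generators of `U(p)` which are "lower" than bidegree
(Kazhdan degree `D`, weight `W`): either of Kazhdan degree `< D`, or of Kazhdan
degree `≤ D` and weight `< W`. -/
def LowSet (n l : ℕ) (h : l ∣ n) (D W : ℕ) : Set (UQ n) :=
  { x : UQ n | ∃ L : List (Bool × Fin (n / l) × Fin (n / l) × Fin l × Fin l),
      (∀ d ∈ L, d.2.2.2.1.val ≤ d.2.2.2.2.val) ∧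
      x = (L.map (pgElem h)).prod ∧
      ((L.map pgDeg).sum < D ∨ ((L.map pgDeg).sum ≤ D ∧ (L.map pgWt).sum < W)) }

/-- The span of the "lower" monomials. -/
def LowSpan (n l : ℕ) (h : l ∣ n) (D W : ℕ) : Submodule ℂ (UQ n) :=
  Submodule.span ℂ (LowSet n l h D W)

/-! # The super tensor power `U(Q(m))^{⊗l}`

Modeled as the superalgebra with generators `x^i_{pq} = 1^{⊗(l-i)} ⊗ e_{pq} ⊗ 1^{⊗(i-1)}`
(even) and `ξ^i_{pq} = 1^{⊗(l-i)} ⊗ f_{pq} ⊗ 1^{⊗(i-1)}` (odd), subject to the `U(Q(m))`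
relations in each tensor slot and to (super-)commutation between different slots. -/

/-- Generators of `U(Q(m))^{⊗l}`: `X i p q` is `x^i_{pq}` and `Xi i p q` is `ξ^i_{pq}`
(`i : Fin l` is the 0-based tensor slot, counted from the right). -/
inductive TGen (m l : ℕ) : Type
  | X : Fin l → Fin m → Fin m → TGen m l
  | Xi : Fin l → Fin m → Fin m → TGen m l

/-- Kronecker delta on slots. -/
def kdl {l : ℕ} (i j : Fin l) : ℂ := if i = j then 1 else 0

/-- The defining relations of `U(Q(m))^{⊗l}`. -/
inductive TRel (m l : ℕ) : FreeAlgebra ℂ (TGen m l) → FreeAlgebra ℂ (TGen m l) → Prop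
  | xx (i i' : Fin l) (p q r s : Fin m) : TRel m l
      (FreeAlgebra.ι ℂ (TGen.X i p q) * FreeAlgebra.ι ℂ (TGen.X i' r s) -
        FreeAlgebra.ι ℂ (TGen.X i' r s) * FreeAlgebra.ι ℂ (TGen.X i p q))
      ((kdl i i' * kd q r) • FreeAlgebra.ι ℂ (TGen.X i p s) -
        (kdl i i' * kd s p) • FreeAlgebra.ι ℂ (TGen.X i' r q))
  | xxi (i i' : Fin l) (p q r s : Fin m) : TRel m l
      (FreeAlgebra.ι ℂ (TGen.X i p q) * FreeAlgebra.ι ℂ (TGen.Xi i' r s) -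
        FreeAlgebra.ι ℂ (TGen.Xi i' r s) * FreeAlgebra.ι ℂ (TGen.X i p q))
      ((kdl i i' * kd q r) • FreeAlgebra.ι ℂ (TGen.Xi i p s) -
        (kdl i i' * kd s p) • FreeAlgebra.ι ℂ (TGen.Xi i' r q))
  | xixi (i i' : Fin l) (p q r s : Fin m) : TRel m l
      (FreeAlgebra.ι ℂ (TGen.Xi i p q) * FreeAlgebra.ι ℂ (TGen.Xi i' r s) +
        FreeAlgebra.ι ℂ (TGen.Xi i' r s) * FreeAlgebra.ι ℂ (TGen.Xi i p q))
      ((kdl i i' * kd q r) • FreeAlgebra.ι ℂ (TGen.X i p s) +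
        (kdl i i' * kd s p) • FreeAlgebra.ι ℂ (TGen.X i' r q))

/-- The superalgebra `U(Q(m))^{⊗l}`. -/
abbrev TQ (m l : ℕ) := RingQuot (TRel m l)

/-- `x^i_{pq} := 1^{⊗(l-i)} ⊗ e_{pq} ⊗ 1^{⊗(i-1)} ∈ U(Q(m))^{⊗l}`. -/
def xT {m l : ℕ} (i : Fin l) (p q : Fin m) : TQ m l :=
  RingQuot.mkAlgHom ℂ (TRel m l) (FreeAlgebra.ι ℂ (TGen.X i p q))

/-- `ξ^i_{pq} := 1^{⊗(l-i)} ⊗ f_{pq} ⊗ 1^{⊗(i-1)} ∈ U(Q(m))^{⊗l}`. -/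
def xiT {m l : ℕ} (i : Fin l) (p q : Fin m) : TQ m l :=
  RingQuot.mkAlgHom ℂ (TRel m l) (FreeAlgebra.ι ℂ (TGen.Xi i p q))

/-! # The super-Yangian `Y(Q(n))` -/

/-- The index set `{±1, …, ±n}`:  `(false, a)` is the positive index `a` (even),
`(true, a)` is the negative index `-a` (odd). -/
abbrev QIdx (n : ℕ) := Bool × Fin n

/-- Negation `i ↦ -i` on indices. -/
def qneg {n : ℕ} (i : QIdx n) : QIdx n := (!i.1, i.2)

/-- The parity `p(i)`: `0` for positive `i`, `1` for negative `i`. -/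
def qpar {n : ℕ} (i : QIdx n) : ℕ := if i.1 then 1 else 0

/-- Kronecker delta on `{±1, …, ±n}`. -/
def kdq {n : ℕ} (i j : QIdx n) : ℂ := if i = j then 1 else 0

/-- Generators of `Y(Q(n))`: `T m i j` encodes `T^{(m+1)}_{i,j}`. -/
inductive YGen (n : ℕ) : Type
  | T : ℕ → QIdx n → QIdx n → YGen n

/-- `T^{(m)}_{i,j}` in the free algebra, with `T^{(0)}_{i,j} = δ_{ij}`. -/
def Tf {n : ℕ} : ℕ → QIdx n → QIdx n → FreeAlgebra ℂ (YGen n)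
  | 0, i, j => algebraMap ℂ _ (kdq i j)
  | m + 1, i, j => FreeAlgebra.ι ℂ (YGen.T m i j)

/-- The super-commutator `[T^{(a)}_{i,j}, T^{(b)}_{k,l}]` in the free algebra. -/
def ybr {n : ℕ} (a : ℕ) (i j : QIdx n) (b : ℕ) (k l : QIdx n) :
    FreeAlgebra ℂ (YGen n) :=
  Tf a i j * Tf b k l -
    ((-1 : ℂ) ^ ((qpar i + qpar j) * (qpar k + qpar l))) • (Tf b k l * Tf a i j)

/-- The defining relations of the super-Yangian `Y(Q(n))`: for `M, R ≥ 1`,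
`(-1)^{p(i)p(k)+p(i)p(l)+p(k)p(l)} ([T^{(M+1)}_{ij}, T^{(R-1)}_{kl}] - [T^{(M-1)}_{ij}, T^{(R+1)}_{kl}])
 = T^{(M)}_{kj}T^{(R-1)}_{il} + T^{(M-1)}_{kj}T^{(R)}_{il} - T^{(R-1)}_{kj}T^{(M)}_{il}
   - T^{(R)}_{kj}T^{(M-1)}_{il}
   + (-1)^{p(k)+p(l)} (-T^{(M)}_{-k,j}T^{(R-1)}_{-i,l} + T^{(M-1)}_{-k,j}T^{(R)}_{-i,l}
       + T^{(R-1)}_{k,-j}T^{(M)}_{i,-l} - T^{(R)}_{k,-j}T^{(M-1)}_{i,-l})`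
(here `M = m+1`, `R = r+1`), together with `T^{(m)}_{-i,-j} = (-1)^m T^{(m)}_{i,j}`. -/
inductive YRel (n : ℕ) : FreeAlgebra ℂ (YGen n) → FreeAlgebra ℂ (YGen n) → Prop
  | quad (m r : ℕ) (i j k l : QIdx n) : YRel n
      (((-1 : ℂ) ^ (qpar i * qpar k + qpar i * qpar l + qpar k * qpar l)) •
        (ybr (m + 2) i j r k l - ybr m i j (r + 2) k l))
      (Tf (m + 1) k j * Tf r i l + Tf m k j * Tf (r + 1) i l -
        Tf r k j * Tf (m + 1) i l - Tf (r + 1) k j * Tf m i l +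
        ((-1 : ℂ) ^ (qpar k + qpar l)) •
          (-(Tf (m + 1) (qneg k) j * Tf r (qneg i) l) +
            Tf m (qneg k) j * Tf (r + 1) (qneg i) l +
            Tf r k (qneg j) * Tf (m + 1) i (qneg l) -
            Tf (r + 1) k (qneg j) * Tf m i (qneg l)))
  | par (m : ℕ) (i j : QIdx n) : YRel n
      (Tf (m + 1) (qneg i) (qneg j)) (((-1 : ℂ) ^ (m + 1)) • Tf (m + 1) i j)

/-- The super-Yangian `Y(Q(n))`. -/
abbrev YQ (n : ℕ) := RingQuot (YRel n)

/-- The generator `T^{(m)}_{i,j}` of `Y(Q(n))` (with `T^{(0)}_{i,j} = δ_{ij}`). -/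
def TY {n : ℕ} (m : ℕ) (i j : QIdx n) : YQ n :=
  RingQuot.mkAlgHom ℂ (YRel n) (Tf m i j)

/-! # Values of the homomorphisms `U`, `ev`, `ēv` on the generators of `Y(Q(n))`,
and the explicit sums appearing in the main theorems. -/

/-- The value of the homomorphism `U : Y(Q(n)) → U(Q(n))` on the generator
`T^{(r)}_{i,j}`:  `U(T^{(r)}_{i,j}) = (-1)^r e^{(r)}_{j,i}`,
`U(T^{(r)}_{-i,j}) = (-1)^r f^{(r)}_{j,i}` for `i, j > 0`, and the values on the other
generators are forced by `T^{(r)}_{-i,-j} = (-1)^r T^{(r)}_{i,j}`. -/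
def Uval {n : ℕ} (r : ℕ) (i j : QIdx n) : UQ n :=
  (if j.1 then (-1 : ℂ) ^ r else 1) •
    ((-1 : ℂ) ^ r • (if xor i.1 j.1 then fU r j.2 i.2 else eU r j.2 i.2))

/-- The value of the evaluation homomorphism `ev : Y(Q(n)) → U(Q(n))` on `T^{(r)}_{i,j}`:
`ev(T^{(1)}_{i,j}) = -e_{j,i}`, `ev(T^{(1)}_{-i,j}) = -f_{j,i}` for `i, j > 0`,
`ev(T^{(0)}_{i,j}) = δ_{ij}` and `ev(T^{(r)}_{i,j}) = 0` for `r > 1` (with the values on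
the remaining generators forced by `T^{(r)}_{-i,-j} = (-1)^r T^{(r)}_{i,j}`). -/
def evval {n : ℕ} (r : ℕ) (i j : QIdx n) : UQ n :=
  (if j.1 then (-1 : ℂ) ^ r else 1) •
    (match r with
      | 0 => if xor i.1 j.1 then 0 else algebraMap ℂ (UQ n) (kd i.2 j.2)
      | 1 => -(if xor i.1 j.1 then Uf j.2 i.2 else Ue j.2 i.2)
      | _ + 2 => 0)

/-- The value of `ēv = α ∘ ev : Y(Q(n)) → U(Q(n))` on `T^{(r)}_{i,j}`, where `α` is the
principal anti-automorphism of `U(Q(n))`:  `ēv(T^{(1)}_{i,j}) = e_{j,i}`,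
`ēv(T^{(1)}_{-i,j}) = f_{j,i}` for `i, j > 0`, `ēv(T^{(0)}_{i,j}) = δ_{ij}`,
`ēv(T^{(r)}_{i,j}) = 0` for `r > 1`. -/
def bevval {n : ℕ} (r : ℕ) (i j : QIdx n) : UQ n :=
  (if j.1 then (-1 : ℂ) ^ r else 1) •
    (match r with
      | 0 => if xor i.1 j.1 then 0 else algebraMap ℂ (UQ n) (kd i.2 j.2)
      | 1 => (if xor i.1 j.1 then Uf j.2 i.2 else Ue j.2 i.2)
      | _ + 2 => 0)

/-- The sum `Σ_{p_1,…,p_{r-1}} Σ_{l ≥ i_1 ≥ i_2 ≥ … ≥ i_r ≥ 1}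
Π_{a=1}^r (x^{i_a}_{p_{a-1},p_a} + (-1)^{r-a} ξ^{i_a}_{p_{a-1},p_a})`
(with `p_0 = p`, `p_r = q`), an element of `U(Q(m))^{⊗l}`. -/
def chainProdDec (m l : ℕ) (r : ℕ) (p q : Fin m) : TQ m l :=
  ∑ c : Fin (r + 1) → Fin m, ∑ iv : Fin r → Fin l,
    (if c 0 = p ∧ c (Fin.last r) = q ∧ (∀ a b : Fin r, a ≤ b → iv b ≤ iv a)
      then (1 : ℂ) else 0) •
      (List.ofFn fun a : Fin r =>
        xT (iv a) (c a.castSucc) (c a.succ) +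
          ((-1 : ℂ) ^ (r - 1 - a.val)) • xiT (iv a) (c a.castSucc) (c a.succ)).prod

/-- The sum `Σ_{p_1,…,p_{r-1}} Σ_{1 ≤ i_1 < i_2 < … < i_r ≤ l}
Π_{a=1}^r (x^{i_a}_{p_{a-1},p_a} + (-1)^{r-a} ξ^{i_a}_{p_{a-1},p_a})`
(with `p_0 = p`, `p_r = q`), an element of `U(Q(m))^{⊗l}`. -/
def chainProdInc (m l : ℕ) (r : ℕ) (p q : Fin m) : TQ m l :=
  ∑ c : Fin (r + 1) → Fin m, ∑ iv : Fin r → Fin l,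
    (if c 0 = p ∧ c (Fin.last r) = q ∧ (∀ a b : Fin r, a < b → iv a < iv b)
      then (1 : ℂ) else 0) •
      (List.ofFn fun a : Fin r =>
        xT (iv a) (c a.castSucc) (c a.succ) +
          ((-1 : ℂ) ^ (r - 1 - a.val)) • xiT (iv a) (c a.castSucc) (c a.succ)).prod

/-- The elements `z^{(r)}_{±q,p}` of `U(Q(m))^{⊗l}`:  the even (`sgn = false`,
giving `z^{(r)}_{q,p}`) resp. odd (`sgn = true`, giving `z^{(r)}_{-q,p}`) component of
`chainProdDec`, computed using the parity involution `σT` of `U(Q(m))^{⊗l}`;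
`z^{(0)}_{q,p} = δ_{qp}`, `z^{(0)}_{-q,p} = 0`. -/
def zDec {m l : ℕ} (σT : TQ m l →ₐ[ℂ] TQ m l) :
    ℕ → Bool → Fin m → Fin m → TQ m l
  | 0, sgn, q, p => if sgn then 0 else algebraMap ℂ (TQ m l) (kd q p)
  | r + 1, sgn, q, p =>
      (2⁻¹ : ℂ) • (chainProdDec m l (r + 1) p q +
        (if sgn then (-1 : ℂ) else 1) • σT (chainProdDec m l (r + 1) p q))

/-- The elements `z̃^{(r)}_{±q,p}` of `U(Q(m))^{⊗l}` (as `zDec`, with increasing chains). -/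
def zInc {m l : ℕ} (σT : TQ m l →ₐ[ℂ] TQ m l) :
    ℕ → Bool → Fin m → Fin m → TQ m l
  | 0, sgn, q, p => if sgn then 0 else algebraMap ℂ (TQ m l) (kd q p)
  | r + 1, sgn, q, p =>
      (2⁻¹ : ℂ) • (chainProdInc m l (r + 1) p q +
        (if sgn then (-1 : ℂ) else 1) • σT (chainProdInc m l (r + 1) p q))

/-- The explicit formula for the antipode value `S(T^{(r)}_{i,j})` (`r ≥ 1`):
`S(T^{(r)}_{i,j}) = Σ_{m=1}^{r} (-1)^m Σ_{i_1,…,i_{m-1}} Σ_{r_1+⋯+r_m=r, r_a>0}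
(-1)^{ν(i,i_1,…,i_{m-1},j)} T^{(r_1)}_{i,i_1} ⋯ T^{(r_m)}_{i_{m-1},j}` where
`ν(i_0,…,i_m) = Σ_{0≤k<s≤m-1} (p(i_k)+p(i_{k+1}))(p(i_s)+p(i_{s+1}))`. -/
def STval {n : ℕ} (r : ℕ) (i j : QIdx n) : YQ n :=
  ∑ m : Fin r,
    ((-1 : ℂ) ^ (m.val + 1)) •
      ∑ ch : Fin (m.val + 2) → QIdx n, ∑ c : Fin (m.val + 1) → Fin (r + 1),
        (if ch 0 = i ∧ ch (Fin.last (m.val + 1)) = j ∧ (∀ a, 1 ≤ (c a).val) ∧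
              (∑ a, (c a).val) = r
          then ((-1 : ℂ) ^ (∑ a : Fin (m.val + 1), ∑ b : Fin (m.val + 1),
              if a < b then
                (qpar (ch a.castSucc) + qpar (ch a.succ)) *
                  (qpar (ch b.castSucc) + qpar (ch b.succ))
              else 0))
          else 0) •
        (List.ofFn fun a : Fin (m.val + 1) =>
          TY (c a).val (ch a.castSucc) (ch a.succ)).prod


section Helpers

open Finset

lemma sum_pi_succ {M : Type*} [AddCommMonoid M] {N s : ℕ}
    (f : (Fin (s+1) → Fin N) → M) :
    ∑ g : Fin (s+1) → Fin N, f g =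
      ∑ g0 : Fin N, ∑ g' : Fin s → Fin N, f (Fin.cons g0 g') := by
  rw [← Equiv.sum_comp (Fin.consEquiv (fun _ : Fin (s+1) => Fin N)) f,
    Fintype.sum_prod_type]
  rfl

lemma sum_castSucc_range {M : Type*} [AddCommMonoid M] {s k : ℕ}
    (f : (Fin s → Fin (k+1)) → M)
    (hf : ∀ g, (∃ a, g a = Fin.last k) → f g = 0) :
    ∑ g : Fin s → Fin (k+1), f g =
      ∑ g' : Fin s → Fin k, f (Fin.castSucc ∘ g') := by
  classical
  rw [← Finset.sum_image (f := f)
      (g := fun g' : Fin s → Fin k => Fin.castSucc ∘ g') (s := Finset.univ)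
      (fun x _ y _ hxy => funext fun a => Fin.castSucc_injective _ (congrFun hxy a))]
  refine (Finset.sum_subset (Finset.subset_univ _) ?_).symm
  intro g _ hg
  refine hf g ?_
  by_contra h
  push_neg at h
  exact hg (Finset.mem_image.mpr ⟨fun a => (g a).castPred (h a), Finset.mem_univ _,
    funext fun a => Fin.castSucc_castPred _ _⟩)

lemma anti_cons_last {s k : ℕ} (iv : Fin s → Fin (k+1)) :
    (∀ a b : Fin (s+1), a ≤ b →
        Fin.cons (α := fun _ => Fin (k+1)) (Fin.last k) iv b ≤
          Fin.cons (α := fun _ => Fin (k+1)) (Fin.last k) iv a)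
      ↔ (∀ a b : Fin s, a ≤ b → iv b ≤ iv a) := by
  constructor
  · intro h a b hab
    have := h a.succ b.succ (Fin.succ_le_succ_iff.mpr hab)
    simpa [Fin.cons_succ] using this
  · intro h a b hab
    induction a using Fin.cases with
    | zero => simpa using Fin.le_last _
    | succ a' =>
      induction b using Fin.cases with
      | zero => exact absurd (Fin.le_zero_iff.mp hab) (Fin.succ_ne_zero a')
      | succ b' =>
        simpa [Fin.cons_succ] using h a' b' (Fin.succ_le_succ_iff.mp hab)

lemma anti_castSucc {s k : ℕ} (iv : Fin s → Fin k) :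
    (∀ a b : Fin s, a ≤ b →
        (Fin.castSucc ∘ iv) b ≤ (Fin.castSucc ∘ iv) a)
      ↔ (∀ a b : Fin s, a ≤ b → iv b ≤ iv a) := by
  simp [Fin.castSucc_le_castSucc_iff]

lemma cons_castSucc_comp {s k : ℕ} (j : Fin k) (iv : Fin s → Fin k) :
    Fin.cons (n := s) j.castSucc (Fin.castSucc ∘ iv) = Fin.castSucc ∘ Fin.cons j iv := by
  funext a
  induction a using Fin.cases <;> simp

lemma sum_delta_smul {M : Type*} [AddCommMonoid M] [Module ℂ M] {n : ℕ}
    (p : Fin n) (P : Prop) [Decidable P] (v : Fin n → M) :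
    ∑ x : Fin n, (if x = p ∧ P then (1:ℂ) else 0) • v x
      = (if P then (1:ℂ) else 0) • v p := by
  rw [Finset.sum_eq_single p]
  · simp
  · intro b _ hb; simp [hb]
  · simp

lemma sum_delta_smul' {M : Type*} [AddCommMonoid M] [Module ℂ M] {n : ℕ}
    (p : Fin n) (P : Prop) [Decidable P] (v : Fin n → M) :
    ∑ x : Fin n, (if p = x ∧ P then (1:ℂ) else 0) • v x
      = (if P then (1:ℂ) else 0) • v p := by
  rw [Finset.sum_eq_single p]
  · simp
  · intro b _ hb; simp [Ne.symm hb]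
  · simp

end Helpers

section Basics
open Finset

lemma kd_comm {n : ℕ} (p q : Fin n) : kd p q = kd q p := by
  simp [kd, eq_comm]

lemma eU_zero {n : ℕ} (p q : Fin n) : eU 0 p q = algebraMap ℂ (UQ n) (kd p q) := rfl
lemma fU_zero {n : ℕ} (p q : Fin n) : fU 0 p q = 0 := rfl

lemma chain_zero (n k : ℕ) (p q : Fin n) :
    chainProdDec n k 0 p q = algebraMap ℂ (TQ n k) (kd p q) := by
  classical
  simp only [chainProdDec, Fintype.sum_unique, List.ofFn_zero, List.prod_nil,
    IsEmpty.forall_iff, and_true, forall_const, ite_smul, one_smul, zero_smul,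
    ite_and]
  rw [sum_pi_succ]
  simp only [Fintype.sum_unique, Fin.cons_zero,
    show Fin.last 0 = (0 : Fin 1) from rfl]
  rw [Finset.sum_ite_eq' Finset.univ p (fun v => if v = q then (1 : TQ n k) else 0)]
  simp [kd, apply_ite (algebraMap ℂ (TQ n k))]

lemma chain_zero' (n r : ℕ) (p q : Fin n) :
    chainProdDec n 0 (r+1) p q = 0 := by
  classical
  simp only [chainProdDec]
  have : IsEmpty (Fin (r+1) → Fin 0) := ⟨fun f => (f 0).elim0⟩
  simp [Finset.univ_eq_empty]

lemma gU_succ {n : ℕ} (s : ℕ) (ε : ℂ) (hε : ε * ε = 1) (p q : Fin n) :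
    eU (s+1) p q + ε • fU (s+1) p q =
      ∑ m : Fin n, (Ue p m + (ε * (-1:ℂ)^s) • Uf p m) * (eU s m q + ε • fU s m q) := by
  simp only [eU, fU, efU, mul_add, add_mul, smul_add, smul_mul_assoc, mul_smul_comm,
    smul_smul, Finset.sum_add_distrib, ← Finset.smul_sum]
  match_scalars
  all_goals try ring
  all_goals try linear_combination (-((-1:ℂ)^s)) * hε
  all_goals linear_combination (-(2:ℂ)*(-1:ℂ)^s) * hε

end Basics

section Split
open Finset

/-- The basic factor `x + (-1)^e ξ`. -/
def cfac {n k : ℕ} (e : ℕ) (i : Fin k) (u v : Fin n) : TQ n k :=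
  xT i u v + ((-1:ℂ)^e) • xiT i u v

lemma chainProdDec_def (n k r : ℕ) (p q : Fin n) :
    chainProdDec n k r p q =
      ∑ c : Fin (r+1) → Fin n, ∑ iv : Fin r → Fin k,
        (if c 0 = p ∧ c (Fin.last r) = q ∧ (∀ a b : Fin r, a ≤ b → iv b ≤ iv a)
          then (1:ℂ) else 0) •
        (List.ofFn fun a : Fin r =>
          cfac (r - 1 - a.val) (iv a) (c a.castSucc) (c a.succ)).prod := rfl

lemma sum_split_last {M : Type*} [AddCommMonoid M] {s k : ℕ}
    (f : (Fin (s+1) → Fin (k+1)) → M)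
    (hf : ∀ (g0 : Fin (k+1)) (g : Fin s → Fin (k+1)), g0 ≠ Fin.last k →
      (∃ a, g a = Fin.last k) → f (Fin.cons g0 g) = 0) :
    ∑ g : Fin (s+1) → Fin (k+1), f g =
      (∑ gt : Fin s → Fin (k+1), f (Fin.cons (Fin.last k) gt)) +
        ∑ g' : Fin (s+1) → Fin k, f (Fin.castSucc ∘ g') := by
  rw [sum_pi_succ, Fin.sum_univ_castSucc, add_comm]
  congr 1
  rw [sum_pi_succ (f := fun g' : Fin (s+1) → Fin k => f (Fin.castSucc ∘ g'))]
  refine Finset.sum_congr rfl fun j _ => ?_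
  rw [sum_castSucc_range (f := fun gt => f (Fin.cons j.castSucc gt))
    (fun g hg => hf _ g (Fin.castSucc_lt_last j).ne hg)]
  exact Finset.sum_congr rfl fun g' _ => by rw [cons_castSucc_comp]

lemma chunkB (n k r : ℕ) (ish : TQ n k →ₐ[ℂ] TQ n (k+1))
    (hishx : ∀ (a : Fin k) (i j : Fin n), ish (xT a i j) = xT a.castSucc i j)
    (hishxi : ∀ (a : Fin k) (i j : Fin n), ish (xiT a i j) = xiT a.castSucc i j)
    (p q : Fin n) :
    (∑ c : Fin (r+1+1) → Fin n, ∑ iv'' : Fin (r+1) → Fin k,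
        (if c 0 = p ∧ c (Fin.last (r+1)) = q ∧
            (∀ a b : Fin (r+1), a ≤ b →
              (Fin.castSucc ∘ iv'') b ≤ (Fin.castSucc ∘ iv'') a)
          then (1:ℂ) else 0) •
        (List.ofFn fun a : Fin (r+1) =>
          cfac (r + 1 - 1 - a.val) ((Fin.castSucc ∘ iv'') a)
            (c a.castSucc) (c a.succ)).prod)
      = ish (chainProdDec n k (r+1) p q) := by
  rw [chainProdDec_def, map_sum]
  refine Finset.sum_congr rfl fun c _ => ?_
  rw [map_sum]
  refine Finset.sum_congr rfl fun iv _ => ?_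
  rw [map_smul, map_list_prod, List.map_ofFn]
  simp only [anti_castSucc]
  congr 1
  refine congrArg List.prod (congrArg List.ofFn (funext fun a => ?_))
  simp only [Function.comp_apply, cfac, map_add, map_smul, hishx, hishxi]

set_option maxHeartbeats 1000000 in
lemma chunkA (n k r : ℕ) (p q : Fin n) :
    (∑ c : Fin (r+1+1) → Fin n, ∑ ivt : Fin r → Fin (k+1),
        (if c 0 = p ∧ c (Fin.last (r+1)) = q ∧
            (∀ a b : Fin (r+1), a ≤ b →
              Fin.cons (α := fun _ => Fin (k+1)) (Fin.last k) ivt b ≤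
                Fin.cons (α := fun _ => Fin (k+1)) (Fin.last k) ivt a)
          then (1:ℂ) else 0) •
        (List.ofFn fun a : Fin (r+1) =>
          cfac (r + 1 - 1 - a.val)
            (Fin.cons (α := fun _ => Fin (k+1)) (Fin.last k) ivt a)
            (c a.castSucc) (c a.succ)).prod)
      = ∑ m : Fin n, cfac r (Fin.last k) p m * chainProdDec n (k+1) r m q := by
  -- rewrite the left side pointwise
  have L : ∀ (c0 : Fin n) (c' : Fin (r+1) → Fin n) (ivt : Fin r → Fin (k+1)),
      ((if Fin.cons (α := fun _ => Fin n) c0 c' 0 = p ∧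
            Fin.cons (α := fun _ => Fin n) c0 c' (Fin.last (r+1)) = q ∧
            (∀ a b : Fin (r+1), a ≤ b →
              Fin.cons (α := fun _ => Fin (k+1)) (Fin.last k) ivt b ≤
                Fin.cons (α := fun _ => Fin (k+1)) (Fin.last k) ivt a)
          then (1:ℂ) else 0) •
        (List.ofFn fun a : Fin (r+1) =>
          cfac (r + 1 - 1 - a.val)
            (Fin.cons (α := fun _ => Fin (k+1)) (Fin.last k) ivt a)
            (Fin.cons (α := fun _ => Fin n) c0 c' a.castSucc)
            (Fin.cons (α := fun _ => Fin n) c0 c' a.succ)).prod)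
      = (if c0 = p ∧ (c' (Fin.last r) = q ∧ (∀ a b : Fin r, a ≤ b → ivt b ≤ ivt a))
          then (1:ℂ) else 0) •
        (cfac r (Fin.last k) c0 (c' 0) *
          (List.ofFn fun a : Fin r =>
            cfac (r - 1 - a.val) (ivt a) (c' a.castSucc) (c' a.succ)).prod) := by
    intro c0 c' ivt
    refine congrArg₂ (f := fun (c : ℂ) (x : TQ n (k+1)) => c • x) ?_ ?_
    · refine if_congr ?_ rfl rfl
      rw [Fin.cons_zero, ← Fin.succ_last, Fin.cons_succ, anti_cons_last]
    · rw [List.ofFn_succ, List.prod_cons]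
      refine congrArg₂ (· * ·) ?_
        (congrArg List.prod (congrArg List.ofFn (funext fun a => ?_)))
      · show cfac (r + 1 - 1 - (0 : Fin (r+1)).val) _ _ _ = _
        have h0 : r + 1 - 1 - (0 : Fin (r+1)).val = r := by simp
        rw [h0]
        simp [cfac]
      · show cfac (r + 1 - 1 - (a.succ).val) _ _ _ = _
        have he : r + 1 - 1 - (a.succ).val = r - 1 - a.val := by
          simp only [Fin.val_succ]; omega
        rw [he, ← Fin.succ_castSucc]
        simp only [Fin.cons_succ]
  rw [sum_pi_succ]
  refine Eq.trans (Finset.sum_congr rfl fun c0 _ => Finset.sum_congr rfl fun c' _ =>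
    Finset.sum_congr rfl fun ivt _ => L c0 c' ivt) ?_
  calc
    ∑ c0 : Fin n, ∑ c' : Fin (r+1) → Fin n, ∑ ivt : Fin r → Fin (k+1),
        (if c0 = p ∧ (c' (Fin.last r) = q ∧ (∀ a b : Fin r, a ≤ b → ivt b ≤ ivt a))
          then (1:ℂ) else 0) •
        (cfac r (Fin.last k) c0 (c' 0) *
          (List.ofFn fun a : Fin r =>
            cfac (r - 1 - a.val) (ivt a) (c' a.castSucc) (c' a.succ)).prod)
      = ∑ c' : Fin (r+1) → Fin n, ∑ ivt : Fin r → Fin (k+1),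
        (if c' (Fin.last r) = q ∧ (∀ a b : Fin r, a ≤ b → ivt b ≤ ivt a)
          then (1:ℂ) else 0) •
        (cfac r (Fin.last k) p (c' 0) *
          (List.ofFn fun a : Fin r =>
            cfac (r - 1 - a.val) (ivt a) (c' a.castSucc) (c' a.succ)).prod) := by
        rw [Finset.sum_comm]
        refine Finset.sum_congr rfl fun c' _ => ?_
        rw [Finset.sum_comm]
        exact Finset.sum_congr rfl fun ivt _ => sum_delta_smul p _ _
    _ = ∑ m : Fin n, cfac r (Fin.last k) p m * chainProdDec n (k+1) r m q := by
        refine Eq.symm ?_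
        refine Eq.trans (Finset.sum_congr rfl fun m _ =>
          congrArg (fun z => cfac r (Fin.last k) p m * z)
            (chainProdDec_def n (k+1) r m q)) ?_
        simp only [Finset.mul_sum, mul_smul_comm]
        rw [Finset.sum_comm]
        refine Finset.sum_congr rfl fun c' _ => ?_
        rw [Finset.sum_comm]
        refine Finset.sum_congr rfl fun ivt _ => ?_
        exact sum_delta_smul' (c' 0) _ _

set_option maxHeartbeats 1000000 in
lemma chain_split (n k r : ℕ) (ish : TQ n k →ₐ[ℂ] TQ n (k+1))
    (hishx : ∀ (a : Fin k) (i j : Fin n), ish (xT a i j) = xT a.castSucc i j)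
    (hishxi : ∀ (a : Fin k) (i j : Fin n), ish (xiT a i j) = xiT a.castSucc i j)
    (p q : Fin n) :
    chainProdDec n (k+1) (r+1) p q =
      (∑ m : Fin n, cfac r (Fin.last k) p m * chainProdDec n (k+1) r m q) +
        ish (chainProdDec n k (r+1) p q) := by
  have vanish : ∀ (c : Fin (r+1+1) → Fin n) (g0 : Fin (k+1))
      (g : Fin r → Fin (k+1)), g0 ≠ Fin.last k → (∃ a, g a = Fin.last k) →
      ((if c 0 = p ∧ c (Fin.last (r+1)) = q ∧
          (∀ a b : Fin (r+1), a ≤ b →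
            Fin.cons (α := fun _ => Fin (k+1)) g0 g b ≤
              Fin.cons (α := fun _ => Fin (k+1)) g0 g a)
        then (1:ℂ) else 0) •
        (List.ofFn fun a : Fin (r+1) =>
          cfac (r + 1 - 1 - a.val) (Fin.cons (α := fun _ => Fin (k+1)) g0 g a)
            (c a.castSucc) (c a.succ)).prod) = 0 := by
    rintro c g0 g hne ⟨a, ha⟩
    rw [if_neg, zero_smul]
    rintro ⟨-, -, hAT⟩
    have := hAT 0 a.succ (Fin.zero_le _)
    rw [Fin.cons_succ, Fin.cons_zero, ha] at this
    exact hne (le_antisymm (Fin.le_last g0) this)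
  rw [chainProdDec_def n (k+1) (r+1) p q]
  refine Eq.trans (Finset.sum_congr rfl fun c _ =>
    sum_split_last _ (fun g0 g h1 h2 => vanish c g0 g h1 h2)) ?_
  refine Eq.trans Finset.sum_add_distrib ?_
  exact congrArg₂ (· + ·) (chunkA n k r p q) (chunkB n k r ish hishx hishxi p q)

end Split

section LemR
open Finset

lemma kd_sum {n : ℕ} (p q : Fin n) : ∑ m, kd p m * kd m q = kd p q := by
  simp only [kd, ite_mul, one_mul, zero_mul]
  rw [Finset.sum_ite_eq]
  simp

lemma kd_smul_sum' {M : Type*} [AddCommMonoid M] [Module ℂ M] {n : ℕ}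
    (q : Fin n) (v : Fin n → M) : ∑ m, kd m q • v m = v q := by
  simp only [kd, ite_smul, one_smul, zero_smul]
  rw [Finset.sum_ite_eq']
  simp

lemma kd_smul_sum {M : Type*} [AddCommMonoid M] [Module ℂ M] {n : ℕ}
    (p : Fin n) (v : Fin n → M) : ∑ m, kd p m • v m = v p := by
  simp only [kd, ite_smul, one_smul, zero_smul]
  rw [Finset.sum_ite_eq]
  simp

set_option maxHeartbeats 1000000 in
lemma lemR (n k : ℕ) (ish : TQ n k →ₐ[ℂ] TQ n (k+1))
    (hishx : ∀ (a : Fin k) (i j : Fin n), ish (xT a i j) = xT a.castSucc i j)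
    (hishxi : ∀ (a : Fin k) (i j : Fin n), ish (xiT a i j) = xiT a.castSucc i j)
    (emb : UQ n →ₐ[ℂ] TQ n (k+1))
    (hembx : ∀ i j : Fin n, emb (Ue i j) = xT (Fin.last k) i j)
    (hembxi : ∀ i j : Fin n, emb (Uf i j) = xiT (Fin.last k) i j)
    (r : ℕ) (p q : Fin n) :
    chainProdDec n (k+1) r p q =
      ∑ t : Fin (r+1), ∑ m : Fin n,
        emb (eU (r - t.val) p m + ((-1:ℂ)^t.val) • fU (r - t.val) p m) *
          ish (chainProdDec n k t.val m q) := by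
  induction r generalizing p with
  | zero =>
    rw [chain_zero, Fin.sum_univ_succ]
    simp only [Finset.univ_eq_empty, Finset.sum_empty, add_zero, Fin.val_zero,
      Nat.sub_zero, pow_zero, one_smul, eU_zero, fU_zero, chain_zero,
      AlgHom.commutes, ← map_mul, ← map_sum, kd_sum]
  | succ r IH =>
    rw [chain_split n k r ish hishx hishxi p q]
    have hfac : ∀ (t : Fin (r+1)) (m' : Fin n),
        (∑ m : Fin n, cfac r (Fin.last k) p m *
          emb (eU (r - t.val) m m' + ((-1:ℂ)^t.val) • fU (r - t.val) m m'))
        = emb (eU (r + 1 - t.val) p m' + ((-1:ℂ)^t.val) • fU (r + 1 - t.val) p m') := by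
      intro t m'
      have ht : t.val ≤ r := by omega
      have hε : ((-1:ℂ)^t.val) * ((-1:ℂ)^t.val) = 1 := by
        rw [← pow_add, show t.val + t.val = 2 * t.val from by ring, pow_mul]
        norm_num
      have hc : ∀ m : Fin n, cfac r (Fin.last k) p m =
          emb (Ue p m + ((-1:ℂ)^t.val * (-1:ℂ)^(r - t.val)) • Uf p m) := by
        intro m
        rw [map_add, map_smul, hembx, hembxi, cfac]
        congr 2
        rw [← pow_add]
        congr 1
        omega
      have hnat : r + 1 - t.val = (r - t.val) + 1 := by omega
      rw [hnat, gU_succ (r - t.val) ((-1:ℂ)^t.val) hε p m', map_sum]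
      refine Finset.sum_congr rfl fun m _ => ?_
      rw [hc m, ← map_mul]
    calc
      (∑ m : Fin n, cfac r (Fin.last k) p m * chainProdDec n (k+1) r m q) +
          ish (chainProdDec n k (r+1) p q)
        = (∑ t : Fin (r+1), ∑ m' : Fin n,
            emb (eU (r + 1 - t.val) p m' + ((-1:ℂ)^t.val) • fU (r + 1 - t.val) p m') *
              ish (chainProdDec n k t.val m' q)) +
            ish (chainProdDec n k (r+1) p q) := by
          congr 1
          calc
            ∑ m : Fin n, cfac r (Fin.last k) p m * chainProdDec n (k+1) r m q
              = ∑ m : Fin n, ∑ t : Fin (r+1), ∑ m' : Fin n,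
                  cfac r (Fin.last k) p m *
                    (emb (eU (r - t.val) m m' + ((-1:ℂ)^t.val) • fU (r - t.val) m m') *
                      ish (chainProdDec n k t.val m' q)) := by
                refine Finset.sum_congr rfl fun m _ => ?_
                rw [IH m, Finset.mul_sum]
                exact Finset.sum_congr rfl fun t _ => by rw [Finset.mul_sum]
            _ = ∑ t : Fin (r+1), ∑ m' : Fin n,
                  (∑ m : Fin n, cfac r (Fin.last k) p m *
                    emb (eU (r - t.val) m m' + ((-1:ℂ)^t.val) • fU (r - t.val) m m')) *
                      ish (chainProdDec n k t.val m' q) := by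
                rw [Finset.sum_comm]
                refine Finset.sum_congr rfl fun t _ => ?_
                rw [Finset.sum_comm]
                refine Finset.sum_congr rfl fun m' _ => ?_
                rw [Finset.sum_mul]
                exact Finset.sum_congr rfl fun m _ => (mul_assoc _ _ _).symm
            _ = ∑ t : Fin (r+1), ∑ m' : Fin n,
                  emb (eU (r + 1 - t.val) p m' + ((-1:ℂ)^t.val) • fU (r + 1 - t.val) p m') *
                    ish (chainProdDec n k t.val m' q) := by
                refine Finset.sum_congr rfl fun t _ => Finset.sum_congr rfl fun m' _ => ?_
                rw [hfac t m']
      _ = ∑ t : Fin (r+1+1), ∑ m : Fin n,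
            emb (eU (r + 1 - t.val) p m + ((-1:ℂ)^t.val) • fU (r + 1 - t.val) p m) *
              ish (chainProdDec n k t.val m q) := by
          conv_rhs => rw [Fin.sum_univ_castSucc]
          refine congrArg₂ (· + ·) ?_ ?_
          · refine Finset.sum_congr rfl fun t _ => ?_
            simp only [Fin.coe_castSucc]
          · simp only [Fin.val_last, Nat.sub_self, eU_zero, fU_zero, smul_zero,
              add_zero, AlgHom.commutes]
            refine Eq.symm ?_
            refine Eq.trans (Finset.sum_congr rfl fun m _ => ?_) (kd_smul_sum p
              (fun m => ish (chainProdDec n k (r+1) m q)))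
            rw [Algebra.smul_def]

end LemR

section YangianSide

lemma qneg_qneg {n : ℕ} (i : QIdx n) : qneg (qneg i) = i := by
  simp [qneg]

lemma TY_zero {n : ℕ} (i j : QIdx n) :
    TY 0 i j = algebraMap ℂ (YQ n) (kdq i j) :=
  AlgHom.commutes _ _

lemma TY_neg {n : ℕ} (t : ℕ) (i j : QIdx n) :
    TY t (qneg i) (qneg j) = ((-1:ℂ)^t) • TY t i j := by
  cases t with
  | zero =>
    rw [TY_zero, TY_zero, pow_zero, one_smul]
    congr 1
    have hinj : qneg i = qneg j ↔ i = j := by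
      constructor
      · intro h
        have := congrArg qneg h
        rwa [qneg_qneg, qneg_qneg] at this
      · intro h; rw [h]
    simp only [kdq]
    exact if_congr hinj rfl rfl
  | succ m =>
    have h := RingQuot.mkAlgHom_rel ℂ (YRel.par m i j)
    calc TY (m+1) (qneg i) (qneg j)
        = RingQuot.mkAlgHom ℂ (YRel n) (Tf (m+1) (qneg i) (qneg j)) := rfl
      _ = RingQuot.mkAlgHom ℂ (YRel n) (((-1:ℂ)^(m+1)) • Tf (m+1) i j) := h
      _ = ((-1:ℂ)^(m+1)) • TY (m+1) i j := by rw [map_smul]; rfl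

lemma Uval_false {n : ℕ} (s : ℕ) (m p : Fin n) :
    Uval s (false, m) (false, p) = ((-1:ℂ)^s) • eU s p m := by
  simp [Uval]

lemma Uval_true {n : ℕ} (s : ℕ) (m p : Fin n) :
    Uval s (true, m) (false, p) = ((-1:ℂ)^s) • fU s p m := by
  simp [Uval]

end YangianSide

set_option maxHeartbeats 1600000 in
/-- Let `n, l ≥ 1`, `1 ≤ p,q ≤ n` and `r ≥ 1`.  Then in
`U(Q(n))^{⊗l}`:
`U^{⊗l}∘Δ_l^{op}(T^{(r)+}_{q,p}) = (-1)^r Σ_{p_1,…,p_{r-1}} Σ_{l ≥ i_1 ≥ … ≥ i_r ≥ 1}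
Π_{a=1}^r (x^{i_a}_{p_{a-1},p_a} + (-1)^{r-a} ξ^{i_a}_{p_{a-1},p_a})`
(`p_0 = p`, `p_r = q`), where `T^{(r)+}_{q,p} = T^{(r)}_{q,p} + T^{(r)}_{-q,p}`.
The family `G k = U^{⊗k}∘Δ_k^{op}` is characterized as in Statement 10. -/
theorem statement11 (n l : ℕ) (hn : 0 < n) (hl : 1 ≤ l) (p q : Fin n)
    (r : ℕ) (hr : 1 ≤ r)
    (emb : ∀ k : ℕ, Fin k → (UQ n →ₐ[ℂ] TQ n k))
    (hembx : ∀ (k : ℕ) (a : Fin k) (i j : Fin n), emb k a (Ue i j) = xT a i j)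
    (hembxi : ∀ (k : ℕ) (a : Fin k) (i j : Fin n), emb k a (Uf i j) = xiT a i j)
    (ish : ∀ k : ℕ, TQ n k →ₐ[ℂ] TQ n (k + 1))
    (hishx : ∀ (k : ℕ) (a : Fin k) (i j : Fin n), ish k (xT a i j) = xT a.castSucc i j)
    (hishxi : ∀ (k : ℕ) (a : Fin k) (i j : Fin n), ish k (xiT a i j) = xiT a.castSucc i j)
    (G : ∀ k : ℕ, YQ n →ₐ[ℂ] TQ n k)
    (hG1 : ∀ (s : ℕ) (i j : QIdx n), G 1 (TY s i j) = emb 1 0 (Uval s i j))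
    (hGstep : ∀ (k : ℕ), 1 ≤ k → ∀ (s : ℕ) (i j : QIdx n),
      G (k + 1) (TY s i j) =
        ∑ t : Fin (s + 1), ∑ kk : QIdx n,
          emb (k + 1) (Fin.last k) (Uval (s - t.val) kk j) *
            ish k (G k (TY t.val i kk))) :
    G l (TY r (false, q) (false, p) + TY r (true, q) (false, p)) =
      ((-1 : ℂ) ^ r) • chainProdDec n l r p q := by
  have key : ∀ k : ℕ, ∀ (r : ℕ) (p q : Fin n),
      G (k+1) (TY r (false, q) (false, p) + TY r (true, q) (false, p)) =
        ((-1:ℂ)^r) • chainProdDec n (k+1) r p q := by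
    intro k
    induction k with
    | zero =>
      intro r p q
      rw [map_add, hG1 r (false, q) (false, p), hG1 r (true, q) (false, p),
        Uval_false, Uval_true, map_smul, map_smul, ← smul_add, ← map_add]
      refine congrArg (fun z => ((-1:ℂ)^r) • z) ?_
      rw [lemR n 0 (ish 0) (hishx 0) (hishxi 0) (emb 1 (Fin.last 0))
        (hembx 1 (Fin.last 0)) (hembxi 1 (Fin.last 0)) r p q]
      refine Eq.symm ?_
      rw [Finset.sum_eq_single (0 : Fin (r+1))]
      · simp only [Fin.val_zero, Nat.sub_zero, pow_zero, one_smul, chain_zero,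
          AlgHom.commutes]
        refine Eq.trans (Finset.sum_congr rfl fun m _ => ?_)
          (kd_smul_sum' q (fun m => emb 1 (Fin.last 0) (eU r p m + fU r p m)))
        rw [← Algebra.commutes, ← Algebra.smul_def]
      · intro b _ hb
        have hbv : b.val ≠ 0 := fun h => hb (Fin.ext h)
        obtain ⟨s, hs⟩ : ∃ s, b.val = s + 1 := ⟨b.val - 1, by omega⟩
        rw [hs]
        simp only [chain_zero', map_zero, mul_zero, Finset.sum_const_zero]
      · intro h
        exact absurd (Finset.mem_univ _) h
    | succ k IH =>
      intro r p q
      have hq1 : ∀ (t : ℕ) (m : Fin n),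
          TY (n := n) t (false, q) (true, m) =
            ((-1:ℂ)^t) • TY t (true, q) (false, m) := by
        intro t m
        simpa [qneg] using TY_neg t (true, q) (false, m)
      have hq2 : ∀ (t : ℕ) (m : Fin n),
          TY (n := n) t (true, q) (true, m) =
            ((-1:ℂ)^t) • TY t (false, q) (false, m) := by
        intro t m
        simpa [qneg] using TY_neg t (false, q) (false, m)
      rw [map_add, hGstep (k+1) (Nat.le_add_left 1 k) r (false, q) (false, p),
        hGstep (k+1) (Nat.le_add_left 1 k) r (true, q) (false, p),
        ← Finset.sum_add_distrib,
        lemR n (k+1) (ish (k+1)) (hishx (k+1)) (hishxi (k+1))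
          (emb (k+1+1) (Fin.last (k+1))) (hembx (k+1+1) (Fin.last (k+1)))
          (hembxi (k+1+1) (Fin.last (k+1))) r p q,
        Finset.smul_sum]
      refine Finset.sum_congr rfl fun t _ => ?_
      rw [← Finset.sum_add_distrib, Finset.smul_sum, Fintype.sum_prod_type,
        Fintype.sum_bool, ← Finset.sum_add_distrib]
      refine Finset.sum_congr rfl fun m _ => ?_
      have ht := t.isLt
      have hr1 : ((-1:ℂ))^r = (-1:ℂ)^(r - t.val) * (-1:ℂ)^t.val := by
        rw [← pow_add]
        congr 1
        omega
      have hC : chainProdDec n (k+1) t.val m q =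
          ((-1:ℂ)^t.val) • G (k+1) (TY t.val (false, q) (false, m) +
            TY t.val (true, q) (false, m)) := by
        rw [IH t.val m q, smul_smul, ← pow_add,
          show t.val + t.val = 2 * t.val from by ring, pow_mul]
        norm_num
      rw [hq1 t.val m, hq2 t.val m, Uval_false, Uval_true, hC, hr1]
      simp only [map_add, map_smul, mul_add, add_mul, smul_add, smul_mul_assoc,
        mul_smul_comm, smul_smul]
      have h2 : ((-1:ℂ)^t.val)^2 = 1 := by
        rw [← pow_mul, mul_comm, pow_mul]
        norm_num
      match_scalars
      all_goals try ring
      all_goals simp only [pow_mul,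
        show ∀ x : ℂ, x^3 = x^2 * x from fun x => by ring, h2, one_mul, mul_one]
      all_goals try ring
  obtain ⟨l', rfl⟩ : ∃ l', l = l' + 1 := ⟨l - 1, by omega⟩
  exact key l' r p q
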